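/- Both operations ⊛ and ⊠ on M are associative, commutative, and bilinear: for all x1, x2, x3 ∈ M and scalars a1, a2 ∈ ℝ, x1 ∗ (x2 ∗ x3) = (x1 ∗ x2) ∗ x3, x1 ∗ x2 = x2 ∗ x1, and (a1·x1 + a2·x2) ∗ x3 = a1·(x1 ∗ x3) + a2·(x2 ∗ x3), where ∗ denotes either ⊛ or ⊠. -/

import Mathlib

open MeasureTheory Real Filter Topology Polynomial

noncomputable section

/-- The space of finite signed Borel measures on the extended reals `ℝ̄`. -/
abbrev SM := MeasureTheory.SignedMeasure EReal

namespace SCLDPC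

/-- The weight `e^{-α/2}` as an extended nonnegative real (`+∞` at `α = -∞`). -/
def wt (α : EReal) : ENNReal :=
  if α = ⊥ then ⊤ else if α = ⊤ then 0 else ENNReal.ofReal (Real.exp (-(α.toReal) / 2))

/-- A (nonnegative) Borel measure `μ` on `ℝ̄` is symmetric if
`∫_{-E} e^{-α/2} μ(dα) = ∫_{E} e^{-α/2} μ(dα)` for every Borel set `E`
(stated with extended nonnegative integrals, which is equivalent to requiring
equality whenever one of the two sides is finite). -/
def IsSymmMeasure (μ : Measure EReal) : Prop :=
  ∀ E : Set EReal, MeasurableSet E →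
    ∫⁻ α in (fun a : EReal => -a) ⁻¹' E, wt α ∂μ = ∫⁻ α in E, wt α ∂μ

/-- Positive part of the Jordan decomposition. -/
def jp (x : SM) : Measure EReal := x.toJordanDecomposition.posPart

/-- Negative part of the Jordan decomposition. -/
def jn (x : SM) : Measure EReal := x.toJordanDecomposition.negPart

instance (x : SM) : IsFiniteMeasure (jp x) := x.toJordanDecomposition.posPart_finite

instance (x : SM) : IsFiniteMeasure (jn x) := x.toJordanDecomposition.negPart_finite

/-- A finite signed Borel measure on `ℝ̄` is symmetric iff both parts of its Jordan
decomposition are symmetric measures. -/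
def IsSymm (x : SM) : Prop := IsSymmMeasure (jp x) ∧ IsSymmMeasure (jn x)

/-- Membership in `X`, the set of symmetric probability measures on `ℝ̄`. -/
def MemX (x : SM) : Prop :=
  (∃ (μ : Measure EReal) (hμ : IsProbabilityMeasure μ),
      x = (letI := hμ; μ.toSignedMeasure)) ∧ IsSymm x

/-- Membership in `X_d`, the set of differences of symmetric probability measures. -/
def MemXd (y : SM) : Prop := ∃ x1 x2 : SM, MemX x1 ∧ MemX x2 ∧ y = x1 - x2

/-- Integral of a real function against a finite signed measure. -/
def sInt (f : EReal → ℝ) (x : SM) : ℝ := (∫ α, f α ∂(jp x)) - ∫ α, f α ∂(jn x)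

/-- `tanh(α/2)` extended continuously to `ℝ̄`. -/
def tanhHalf (α : EReal) : ℝ :=
  if α = ⊤ then 1 else if α = ⊥ then -1 else Real.tanh (α.toReal / 2)

/-- The inverse hyperbolic tangent on `(-1, 1)`. -/
def artanh (t : ℝ) : ℝ := Real.log ((1 + t) / (1 - t)) / 2

/-- `2 tanh⁻¹(t)` valued in `ℝ̄` (sending `t ≥ 1` to `+∞` and `t ≤ -1` to `-∞`). -/
def atanhTwo (t : ℝ) : EReal :=
  if 1 ≤ t then ⊤ else if t ≤ -1 then ⊥ else ((2 * artanh t : ℝ) : EReal)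

/-- Variable-node convolution `⊛` of two (nonnegative) measures:
`(μ ⊛ ν)(E) = ∫ μ(E - α) ν(dα)`, i.e. the pushforward of `μ × ν` under addition. -/
def mConv (μ ν : Measure EReal) : Measure EReal :=
  (μ.prod ν).map fun p => p.1 + p.2

/-- Check-node convolution `⊠` of two (nonnegative) measures:
`(μ ⊠ ν)(E) = ∫ μ(2 tanh⁻¹(tanh(E/2) / tanh(α/2))) ν(dα)`, where the argument of `μ`
is the image of `E` under `β ↦ 2 tanh⁻¹(tanh(β/2) / tanh(α/2))`; equivalently, the
pushforward of `μ × ν` under `(β, α) ↦ 2 tanh⁻¹(tanh(β/2) · tanh(α/2))`. -/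
def mCheck (μ ν : Measure EReal) : Measure EReal :=
  (μ.prod ν).map fun p => atanhTwo (tanhHalf p.1 * tanhHalf p.2)

instance (μ ν : Measure EReal) [IsFiniteMeasure μ] [IsFiniteMeasure ν] :
    IsFiniteMeasure (mConv μ ν) := by unfold mConv; infer_instance

instance (μ ν : Measure EReal) [IsFiniteMeasure μ] [IsFiniteMeasure ν] :
    IsFiniteMeasure (mCheck μ ν) := by unfold mCheck; infer_instance

/-- The variable-node operation `⊛` extended bilinearly to finite signed measures. -/
def sConv (x y : SM) : SM :=
  (mConv (jp x) (jp y)).toSignedMeasure - (mConv (jp x) (jn y)).toSignedMeasure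
    - (mConv (jn x) (jp y)).toSignedMeasure + (mConv (jn x) (jn y)).toSignedMeasure

/-- The check-node operation `⊠` extended bilinearly to finite signed measures. -/
def sCheck (x y : SM) : SM :=
  (mCheck (jp x) (jp y)).toSignedMeasure - (mCheck (jp x) (jn y)).toSignedMeasure
    - (mCheck (jn x) (jp y)).toSignedMeasure + (mCheck (jn x) (jn y)).toSignedMeasure


/-! ### Auxiliary lemmas -/

open scoped NNReal ENNReal

section PointwiseAux

lemma tanh_lt_one' (x : ℝ) : Real.tanh x < 1 := by
  rw [Real.tanh_eq_sinh_div_cosh, div_lt_one (Real.cosh_pos x), Real.sinh_eq, Real.cosh_eq]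
  have := Real.exp_pos (-x); linarith

lemma neg_one_lt_tanh' (x : ℝ) : -1 < Real.tanh x := by
  rw [Real.tanh_eq_sinh_div_cosh, lt_div_iff₀ (Real.cosh_pos x), Real.sinh_eq, Real.cosh_eq]
  have := Real.exp_pos x; linarith

lemma tanh_artanh {t : ℝ} (h1 : -1 < t) (h2 : t < 1) : Real.tanh (artanh t) = t := by
  have h1t : (0:ℝ) < 1 + t := by linarith
  have h2t : (0:ℝ) < 1 - t := by linarith
  have hrpos : 0 < (1 + t) / (1 - t) := div_pos h1t h2t
  set u := Real.exp (Real.log ((1 + t) / (1 - t)) / 2) with hu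
  have hupos : 0 < u := Real.exp_pos _
  have huu : u * u = (1 + t) / (1 - t) := by
    rw [hu, ← Real.exp_add, add_halves, Real.exp_log hrpos]
  have key : Real.tanh (artanh t) = (u - u⁻¹) / (u + u⁻¹) := by
    rw [artanh, Real.tanh_eq_sinh_div_cosh, Real.sinh_eq, Real.cosh_eq, Real.exp_neg, ← hu]
    field_simp
  rw [key]
  have hne : u + u⁻¹ ≠ 0 := by positivity
  rw [div_eq_iff hne]
  have huu' : u * u * (1 - t) = 1 + t := by rw [huu]; field_simp
  field_simp
  nlinarith [huu']

lemma tanhHalf_mem (α : EReal) : -1 ≤ tanhHalf α ∧ tanhHalf α ≤ 1 := by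
  unfold tanhHalf
  split_ifs with h h'
  · norm_num
  · norm_num
  · exact ⟨(neg_one_lt_tanh' _).le, (tanh_lt_one' _).le⟩

lemma tanhHalf_atanhTwo {t : ℝ} (h1 : -1 ≤ t) (h2 : t ≤ 1) : tanhHalf (atanhTwo t) = t := by
  unfold atanhTwo
  rcases eq_or_lt_of_le h2 with h | h
  · rw [if_pos h.ge]
    simp [tanhHalf, h]
  · rcases eq_or_lt_of_le h1 with h' | h'
    · rw [if_neg (by linarith), if_pos (by linarith)]
      simp [tanhHalf, ← h']
    · rw [if_neg (by linarith), if_neg (by linarith)]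
      have hgen : ∀ s : ℝ, tanhHalf (s : EReal) = Real.tanh (s / 2) := by
        intro s; simp [tanhHalf]
      rw [hgen, mul_div_cancel_left₀ _ (two_ne_zero), tanh_artanh h' h]

lemma tanhHalf_check (a b : EReal) :
    tanhHalf (atanhTwo (tanhHalf a * tanhHalf b)) = tanhHalf a * tanhHalf b := by
  obtain ⟨ha1, ha2⟩ := tanhHalf_mem a
  obtain ⟨hb1, hb2⟩ := tanhHalf_mem b
  have habs : |tanhHalf a * tanhHalf b| ≤ 1 := by
    rw [abs_mul]
    exact mul_le_one₀ (abs_le.2 ⟨ha1, ha2⟩) (abs_nonneg _) (abs_le.2 ⟨hb1, hb2⟩)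
  obtain ⟨h1, h2⟩ := abs_le.1 habs
  exact tanhHalf_atanhTwo h1 h2

lemma measurable_tanh : Measurable Real.tanh := by
  have : Real.tanh = fun x => Real.sinh x / Real.cosh x :=
    funext fun x => Real.tanh_eq_sinh_div_cosh x
  rw [this]
  exact (Real.continuous_sinh.div Real.continuous_cosh fun x => (Real.cosh_pos x).ne').measurable

lemma measurable_tanhHalf : Measurable tanhHalf := by
  unfold tanhHalf
  refine Measurable.ite ?_ measurable_const (Measurable.ite ?_ measurable_const ?_)
  · simpa using measurableSet_singleton (⊤ : EReal)
  · simpa using measurableSet_singleton (⊥ : EReal)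
  · exact measurable_tanh.comp (measurable_ereal_toReal.div_const 2)

lemma measurable_artanh : Measurable artanh := by
  unfold artanh
  exact (Real.measurable_log.comp ((measurable_const.add measurable_id).div
    (measurable_const.sub measurable_id))).div_const 2

lemma measurable_atanhTwo : Measurable atanhTwo := by
  unfold atanhTwo
  refine Measurable.ite ?_ measurable_const (Measurable.ite ?_ measurable_const ?_)
  · exact measurableSet_Ici
  · exact measurableSet_Iic
  · exact measurable_coe_real_ereal.comp (measurable_artanh.const_mul 2)

lemma measurable_checkFun :
    Measurable fun p : EReal × EReal => atanhTwo (tanhHalf p.1 * tanhHalf p.2) :=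
  measurable_atanhTwo.comp ((measurable_tanhHalf.comp measurable_fst).mul
    (measurable_tanhHalf.comp measurable_snd))

lemma measurable_addFun : Measurable fun p : EReal × EReal => p.1 + p.2 := by
  have heq : (fun p : EReal × EReal => p.1 + p.2) = fun p =>
      if p.1 = ⊥ then ⊥ else if p.2 = ⊥ then ⊥ else if p.1 = ⊤ then ⊤ else if p.2 = ⊤ then ⊤
      else ((p.1.toReal + p.2.toReal : ℝ) : EReal) := by
    funext p
    rcases p with ⟨a, b⟩
    induction a using EReal.rec <;> induction b using EReal.rec <;> simp [← EReal.coe_add]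
  rw [heq]
  refine Measurable.ite (measurable_fst (measurableSet_singleton ⊥)) measurable_const
    (Measurable.ite (measurable_snd (measurableSet_singleton ⊥)) measurable_const
      (Measurable.ite (measurable_fst (measurableSet_singleton ⊤)) measurable_const
        (Measurable.ite (measurable_snd (measurableSet_singleton ⊤)) measurable_const ?_)))
  exact measurable_coe_real_ereal.comp ((measurable_ereal_toReal.comp measurable_fst).add
    (measurable_ereal_toReal.comp measurable_snd))

end PointwiseAux

section MeasureAux

variable {F : EReal × EReal → EReal}

lemma bop_comm (hF : Measurable F) (hc : ∀ a b, F (a, b) = F (b, a))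
    (μ ν : Measure EReal) [SFinite μ] [SFinite ν] :
    (μ.prod ν).map F = (ν.prod μ).map F := by
  conv_rhs => rw [← Measure.prod_swap]
  rw [Measure.map_map hF measurable_swap]
  congr 1
  funext p
  exact hc p.1 p.2

lemma bop_add_left (hF : Measurable F) (μ₁ μ₂ ν : Measure EReal)
    [SFinite μ₁] [SFinite μ₂] [SFinite ν] :
    (((μ₁ + μ₂).prod ν).map F) = ((μ₁.prod ν).map F) + ((μ₂.prod ν).map F) := by
  rw [Measure.add_prod, Measure.map_add _ _ hF]

lemma bop_add_right (hF : Measurable F) (μ ν₁ ν₂ : Measure EReal)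
    [SFinite μ] [SFinite ν₁] [SFinite ν₂] :
    ((μ.prod (ν₁ + ν₂)).map F) = ((μ.prod ν₁).map F) + ((μ.prod ν₂).map F) := by
  rw [Measure.prod_add, Measure.map_add _ _ hF]

lemma smul_prod' (c : ℝ≥0) (μ ν : Measure EReal) [IsFiniteMeasure μ] [IsFiniteMeasure ν] :
    (c • μ).prod ν = c • (μ.prod ν) := by
  refine Measure.prod_eq fun s t hs ht => ?_
  rw [Measure.smul_apply, Measure.smul_apply, Measure.prod_prod]
  simp only [ENNReal.smul_def, smul_eq_mul, mul_assoc]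

lemma bop_smul_left (hF : Measurable F) (c : ℝ≥0) (μ ν : Measure EReal)
    [IsFiniteMeasure μ] [IsFiniteMeasure ν] :
    (((c • μ).prod ν).map F) = c • ((μ.prod ν).map F) := by
  rw [smul_prod', Measure.map_smul]

lemma bop_assoc (hF : Measurable F) (ha : ∀ a b c, F (F (a, b), c) = F (a, F (b, c)))
    (μ ν ρ : Measure EReal) [IsFiniteMeasure μ] [IsFiniteMeasure ν] [IsFiniteMeasure ρ] :
    ((((μ.prod ν).map F).prod ρ).map F) = ((μ.prod ((ν.prod ρ).map F)).map F) := by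
  have h1 : ((μ.prod ν).map F).prod ρ = ((μ.prod ν).prod ρ).map (Prod.map F id) := by
    have := Measure.map_prod_map (f := F) (g := (id : EReal → EReal)) (μ.prod ν) ρ hF measurable_id
    rwa [Measure.map_id] at this
  have h2 : μ.prod ((ν.prod ρ).map F) = (μ.prod (ν.prod ρ)).map (Prod.map id F) := by
    have := Measure.map_prod_map (f := (id : EReal → EReal)) (g := F) μ (ν.prod ρ) measurable_id hF
    rwa [Measure.map_id] at this
  rw [h1, h2, ← Measure.prodAssoc_prod,
    Measure.map_map hF (hF.prodMap measurable_id),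
    Measure.map_map hF (measurable_id.prodMap hF),
    Measure.map_map ((hF.comp (measurable_id.prodMap hF))) (MeasurableEquiv.measurable _)]
  congr 1
  funext p
  rcases p with ⟨⟨a, b⟩, c⟩
  exact ha a b c

end MeasureAux


section SignedAux

variable {F : EReal × EReal → EReal}

/-- Signed measure obtained by pushing forward a product of two finite measures. -/
def bsm (F : EReal × EReal → EReal) (μ ν : Measure EReal)
    [IsFiniteMeasure μ] [IsFiniteMeasure ν] : SM :=
  ((μ.prod ν).map F).toSignedMeasure

lemma bsm_comm (hF : Measurable F) (hc : ∀ a b, F (a, b) = F (b, a))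
    (μ ν : Measure EReal) [IsFiniteMeasure μ] [IsFiniteMeasure ν] :
    bsm F μ ν = bsm F ν μ :=
  Measure.toSignedMeasure_congr (bop_comm hF hc μ ν)

lemma bsm_add_left (hF : Measurable F) (μ₁ μ₂ ν : Measure EReal)
    [IsFiniteMeasure μ₁] [IsFiniteMeasure μ₂] [IsFiniteMeasure ν] :
    bsm F (μ₁ + μ₂) ν = bsm F μ₁ ν + bsm F μ₂ ν := by
  unfold bsm
  rw [Measure.toSignedMeasure_congr (bop_add_left hF μ₁ μ₂ ν), Measure.toSignedMeasure_add]

lemma bsm_add_right (hF : Measurable F) (μ ν₁ ν₂ : Measure EReal)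
    [IsFiniteMeasure μ] [IsFiniteMeasure ν₁] [IsFiniteMeasure ν₂] :
    bsm F μ (ν₁ + ν₂) = bsm F μ ν₁ + bsm F μ ν₂ := by
  unfold bsm
  rw [Measure.toSignedMeasure_congr (bop_add_right hF μ ν₁ ν₂), Measure.toSignedMeasure_add]

lemma bsm_smul_left (hF : Measurable F) (c : ℝ≥0) (μ ν : Measure EReal)
    [IsFiniteMeasure μ] [IsFiniteMeasure ν] :
    bsm F (c • μ) ν = (c : ℝ) • bsm F μ ν := by
  unfold bsm
  rw [Measure.toSignedMeasure_congr (bop_smul_left hF c μ ν), Measure.toSignedMeasure_smul,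
    NNReal.smul_def]

lemma bsm_assoc (hF : Measurable F) (ha : ∀ a b c, F (F (a, b), c) = F (a, F (b, c)))
    (μ ν ρ : Measure EReal) [IsFiniteMeasure μ] [IsFiniteMeasure ν] [IsFiniteMeasure ρ] :
    bsm F ((μ.prod ν).map F) ρ = bsm F μ ((ν.prod ρ).map F) := by
  unfold bsm
  exact Measure.toSignedMeasure_congr (by rw [bop_assoc hF ha])

/-- The bilinear extension of the pushforward operation to signed measures. -/
def sop (F : EReal × EReal → EReal) (x y : SM) : SM :=
  bsm F (jp x) (jp y) - bsm F (jp x) (jn y) - bsm F (jn x) (jp y) + bsm F (jn x) (jn y)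

lemma sConv_eq_sop (x y : SM) : sConv x y = sop (fun p => p.1 + p.2) x y := rfl

lemma sCheck_eq_sop (x y : SM) :
    sCheck x y = sop (fun p => atanhTwo (tanhHalf p.1 * tanhHalf p.2)) x y := rfl

lemma jordan_rep (x : SM) : x = (jp x).toSignedMeasure - (jn x).toSignedMeasure := by
  conv_lhs => rw [← x.toSignedMeasure_toJordanDecomposition]
  rfl

lemma measure_add_eq {μ1 μ2 ν1 ν2 : Measure EReal} [IsFiniteMeasure μ1] [IsFiniteMeasure μ2]
    [IsFiniteMeasure ν1] [IsFiniteMeasure ν2]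
    (h : μ1.toSignedMeasure - μ2.toSignedMeasure = ν1.toSignedMeasure - ν2.toSignedMeasure) :
    μ1 + ν2 = ν1 + μ2 := by
  rw [← Measure.toSignedMeasure_eq_toSignedMeasure_iff, Measure.toSignedMeasure_add,
    Measure.toSignedMeasure_add]
  exact sub_eq_sub_iff_add_eq_add.mp h

lemma sop_left_step (hF : Measurable F) {μ1 μ2 A B : Measure EReal} [IsFiniteMeasure μ1]
    [IsFiniteMeasure μ2] [IsFiniteMeasure A] [IsFiniteMeasure B]
    (h : μ1 + B = A + μ2) (ν : Measure EReal) [IsFiniteMeasure ν] :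
    bsm F A ν - bsm F B ν = bsm F μ1 ν - bsm F μ2 ν := by
  rw [sub_eq_sub_iff_add_eq_add, ← bsm_add_left hF, ← bsm_add_left hF]
  exact Measure.toSignedMeasure_congr (by rw [h])

lemma sop_right_step (hF : Measurable F) {ν1 ν2 C D : Measure EReal} [IsFiniteMeasure ν1]
    [IsFiniteMeasure ν2] [IsFiniteMeasure C] [IsFiniteMeasure D]
    (h : ν1 + D = C + ν2) (μ : Measure EReal) [IsFiniteMeasure μ] :
    bsm F μ C - bsm F μ D = bsm F μ ν1 - bsm F μ ν2 := by
  rw [sub_eq_sub_iff_add_eq_add, ← bsm_add_right hF, ← bsm_add_right hF]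
  exact Measure.toSignedMeasure_congr (by rw [h])

lemma sop_rep (hF : Measurable F) {x y : SM} {μ1 μ2 ν1 ν2 : Measure EReal}
    [IsFiniteMeasure μ1] [IsFiniteMeasure μ2] [IsFiniteMeasure ν1] [IsFiniteMeasure ν2]
    (hx : x = μ1.toSignedMeasure - μ2.toSignedMeasure)
    (hy : y = ν1.toSignedMeasure - ν2.toSignedMeasure) :
    sop F x y = bsm F μ1 ν1 - bsm F μ1 ν2 - bsm F μ2 ν1 + bsm F μ2 ν2 := by
  have hx' : μ1 + jn x = jp x + μ2 := measure_add_eq (hx.symm.trans (jordan_rep x))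
  have hy' : ν1 + jn y = jp y + ν2 := measure_add_eq (hy.symm.trans (jordan_rep y))
  show bsm F (jp x) (jp y) - bsm F (jp x) (jn y) - bsm F (jn x) (jp y) + bsm F (jn x) (jn y) = _
  calc bsm F (jp x) (jp y) - bsm F (jp x) (jn y) - bsm F (jn x) (jp y) + bsm F (jn x) (jn y)
      = (bsm F (jp x) (jp y) - bsm F (jn x) (jp y))
          - (bsm F (jp x) (jn y) - bsm F (jn x) (jn y)) := by abel
    _ = (bsm F μ1 (jp y) - bsm F μ2 (jp y)) - (bsm F μ1 (jn y) - bsm F μ2 (jn y)) := by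
          rw [sop_left_step hF hx' (jp y), sop_left_step hF hx' (jn y)]
    _ = (bsm F μ1 (jp y) - bsm F μ1 (jn y)) - (bsm F μ2 (jp y) - bsm F μ2 (jn y)) := by abel
    _ = (bsm F μ1 ν1 - bsm F μ1 ν2) - (bsm F μ2 ν1 - bsm F μ2 ν2) := by
          rw [sop_right_step hF hy' μ1, sop_right_step hF hy' μ2]
    _ = bsm F μ1 ν1 - bsm F μ1 ν2 - bsm F μ2 ν1 + bsm F μ2 ν2 := by abel

lemma sop_comm (hF : Measurable F) (hc : ∀ a b, F (a, b) = F (b, a)) (x y : SM) :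
    sop F x y = sop F y x := by
  unfold sop
  rw [bsm_comm hF hc (jp y) (jp x), bsm_comm hF hc (jp y) (jn x),
    bsm_comm hF hc (jn y) (jp x), bsm_comm hF hc (jn y) (jn x)]
  abel

lemma sop_assoc (hF : Measurable F) (ha : ∀ a b c, F (F (a, b), c) = F (a, F (b, c)))
    (x y z : SM) : sop F x (sop F y z) = sop F (sop F x y) z := by
  have hyz : sop F y z
      = (((jp y).prod (jp z)).map F + ((jn y).prod (jn z)).map F).toSignedMeasure
        - (((jp y).prod (jn z)).map F + ((jn y).prod (jp z)).map F).toSignedMeasure := by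
    rw [Measure.toSignedMeasure_add, Measure.toSignedMeasure_add]
    show _ = bsm F (jp y) (jp z) + bsm F (jn y) (jn z)
      - (bsm F (jp y) (jn z) + bsm F (jn y) (jp z))
    unfold sop
    abel
  have hxy : sop F x y
      = (((jp x).prod (jp y)).map F + ((jn x).prod (jn y)).map F).toSignedMeasure
        - (((jp x).prod (jn y)).map F + ((jn x).prod (jp y)).map F).toSignedMeasure := by
    rw [Measure.toSignedMeasure_add, Measure.toSignedMeasure_add]
    show _ = bsm F (jp x) (jp y) + bsm F (jn x) (jn y)
      - (bsm F (jp x) (jn y) + bsm F (jn x) (jp y))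
    unfold sop
    abel
  rw [sop_rep hF (jordan_rep x) hyz, sop_rep hF hxy (jordan_rep z)]
  rw [bsm_add_right hF, bsm_add_right hF, bsm_add_right hF, bsm_add_right hF,
    bsm_add_left hF, bsm_add_left hF, bsm_add_left hF, bsm_add_left hF]
  rw [bsm_assoc hF ha (jp x) (jp y) (jp z), bsm_assoc hF ha (jp x) (jp y) (jn z),
    bsm_assoc hF ha (jp x) (jn y) (jp z), bsm_assoc hF ha (jp x) (jn y) (jn z),
    bsm_assoc hF ha (jn x) (jp y) (jp z), bsm_assoc hF ha (jn x) (jp y) (jn z),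
    bsm_assoc hF ha (jn x) (jn y) (jp z), bsm_assoc hF ha (jn x) (jn y) (jn z)]
  abel

lemma sop_bilin (hF : Measurable F) (x1 x2 x3 : SM) (a1 a2 : ℝ) :
    sop F (a1 • x1 + a2 • x2) x3 = a1 • sop F x1 x3 + a2 • sop F x2 x3 := by
  have e1 : a1 = (Real.toNNReal a1 : ℝ) - (Real.toNNReal (-a1) : ℝ) := by
    rw [Real.coe_toNNReal', Real.coe_toNNReal']
    rcases le_total 0 a1 with h | h
    · rw [max_eq_left h, max_eq_right (neg_nonpos.2 h)]; ring
    · rw [max_eq_right h, max_eq_left (neg_nonneg.2 h)]; ring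
  have e2 : a2 = (Real.toNNReal a2 : ℝ) - (Real.toNNReal (-a2) : ℝ) := by
    rw [Real.coe_toNNReal', Real.coe_toNNReal']
    rcases le_total 0 a2 with h | h
    · rw [max_eq_left h, max_eq_right (neg_nonpos.2 h)]; ring
    · rw [max_eq_right h, max_eq_left (neg_nonneg.2 h)]; ring
  have s1 : ∀ S : SM, a1 • S = (Real.toNNReal a1 : ℝ) • S - (Real.toNNReal (-a1) : ℝ) • S := by
    intro S; rw [← sub_smul (M := SM), ← e1]
  have s2 : ∀ S : SM, a2 • S = (Real.toNNReal a2 : ℝ) • S - (Real.toNNReal (-a2) : ℝ) • S := by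
    intro S; rw [← sub_smul (M := SM), ← e2]
  have hrep : a1 • x1 + a2 • x2 =
      (Real.toNNReal a1 • jp x1 + Real.toNNReal (-a1) • jn x1
        + (Real.toNNReal a2 • jp x2 + Real.toNNReal (-a2) • jn x2)).toSignedMeasure
      - (Real.toNNReal a1 • jn x1 + Real.toNNReal (-a1) • jp x1
        + (Real.toNNReal a2 • jn x2 + Real.toNNReal (-a2) • jp x2)).toSignedMeasure := by
    rw [Measure.toSignedMeasure_add, Measure.toSignedMeasure_add, Measure.toSignedMeasure_add,
      Measure.toSignedMeasure_add, Measure.toSignedMeasure_add, Measure.toSignedMeasure_add,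
      Measure.toSignedMeasure_smul, Measure.toSignedMeasure_smul, Measure.toSignedMeasure_smul,
      Measure.toSignedMeasure_smul, Measure.toSignedMeasure_smul, Measure.toSignedMeasure_smul,
      Measure.toSignedMeasure_smul, Measure.toSignedMeasure_smul]
    conv_lhs => rw [jordan_rep x1, jordan_rep x2]
    rw [s1, s2]
    simp only [NNReal.smul_def]
    module
  rw [sop_rep hF hrep (jordan_rep x3)]
  simp only [bsm_add_left hF, bsm_smul_left hF]
  rw [show sop F x1 x3 = bsm F (jp x1) (jp x3) - bsm F (jp x1) (jn x3) - bsm F (jn x1) (jp x3)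
      + bsm F (jn x1) (jn x3) from rfl,
    show sop F x2 x3 = bsm F (jp x2) (jp x3) - bsm F (jp x2) (jn x3) - bsm F (jn x2) (jp x3)
      + bsm F (jn x2) (jn x3) from rfl]
  rw [s1, s2]
  module

end SignedAux

/-- Both `⊛` and `⊠` are associative, commutative, and bilinear on
the space `M` of finite signed symmetric Borel measures. -/
theorem ops_associative_commutative_bilinear
    (x1 x2 x3 : SM) (h1 : IsSymm x1) (h2 : IsSymm x2) (h3 : IsSymm x3) (a1 a2 : ℝ) :
    sConv x1 (sConv x2 x3) = sConv (sConv x1 x2) x3 ∧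
    sConv x1 x2 = sConv x2 x1 ∧
    sConv (a1 • x1 + a2 • x2) x3 = a1 • sConv x1 x3 + a2 • sConv x2 x3 ∧
    sCheck x1 (sCheck x2 x3) = sCheck (sCheck x1 x2) x3 ∧
    sCheck x1 x2 = sCheck x2 x1 ∧
    sCheck (a1 • x1 + a2 • x2) x3 = a1 • sCheck x1 x3 + a2 • sCheck x2 x3 := by
  have haddc : ∀ a b : EReal, a + b = b + a := fun a b => add_comm a b
  have hadda : ∀ a b c : EReal, (a + b) + c = a + (b + c) := fun a b c => add_assoc a b c
  have hchkc : ∀ a b : EReal, atanhTwo (tanhHalf a * tanhHalf b)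
      = atanhTwo (tanhHalf b * tanhHalf a) := fun a b => by rw [mul_comm]
  have hchka : ∀ a b c : EReal,
      atanhTwo (tanhHalf (atanhTwo (tanhHalf a * tanhHalf b)) * tanhHalf c)
        = atanhTwo (tanhHalf a * tanhHalf (atanhTwo (tanhHalf b * tanhHalf c))) := fun a b c => by
    rw [tanhHalf_check, tanhHalf_check, mul_assoc]
  refine ⟨?_, ?_, ?_, ?_, ?_, ?_⟩
  · simp only [sConv_eq_sop]
    exact sop_assoc measurable_addFun hadda x1 x2 x3
  · simp only [sConv_eq_sop]
    exact sop_comm measurable_addFun haddc x1 x2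
  · simp only [sConv_eq_sop]
    exact sop_bilin measurable_addFun x1 x2 x3 a1 a2
  · simp only [sCheck_eq_sop]
    exact sop_assoc measurable_checkFun hchka x1 x2 x3
  · simp only [sCheck_eq_sop]
    exact sop_comm measurable_checkFun hchkc x1 x2
  · simp only [sCheck_eq_sop]
    exact sop_bilin measurable_checkFun x1 x2 x3 a1 a2

end SCLDPC
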